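/- Let D = {z ∈ 𝔻² : |z₂|² − a² < 2(1 − a²)|z₁|} for 0 < a < 1. Then D is a balanced domain: it is open, contains 0, and λz ∈ D whenever z ∈ D and |λ| ≤ 1. Moreover h_D((0,d)) = |d|/a for all d ∈ ℂ. -/

import Mathlib

/-- The Minkowski function of a set `D ⊂ ℂ²`: `h_D(z) = inf {t > 0 : z/t ∈ D}`. -/
noncomputable def mink (D : Set (ℂ × ℂ)) (z : ℂ × ℂ) : ℝ :=
  sInf {t : ℝ | 0 < t ∧ t⁻¹ • z ∈ D}

/-- Example 5: `D = {z ∈ 𝔻² : |z₂|² − a² < 2(1 − a²)|z₁|}` is a balanced domain (open,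
contains `0`, and stable under multiplication by `λ` with `|λ| ≤ 1`), and
`h_D((0,d)) = |d|/a` for all `d ∈ ℂ`. -/
theorem stmt15 (a : ℝ) (ha0 : 0 < a) (ha1 : a < 1) (D : Set (ℂ × ℂ))
    (hD : D = {z : ℂ × ℂ | ‖z.1‖ < 1 ∧ ‖z.2‖ < 1 ∧
      (‖z.2‖) ^ 2 - a ^ 2 < 2 * (1 - a ^ 2) * ‖z.1‖}) :
    IsOpen D ∧ ((0 : ℂ), (0 : ℂ)) ∈ D ∧
    (∀ z ∈ D, ∀ l : ℂ, ‖l‖ ≤ 1 → l • z ∈ D) ∧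
    ∀ d : ℂ, mink D ((0 : ℂ), d) = ‖d‖ / a := by
  subst hD
  have hc1 : Continuous fun z : ℂ × ℂ => ‖z.1‖ :=
    continuous_norm.comp continuous_fst
  have hc2 : Continuous fun z : ℂ × ℂ => ‖z.2‖ :=
    continuous_norm.comp continuous_snd
  refine ⟨?_, ?_, ?_, ?_⟩
  · have h1 : IsOpen {z : ℂ × ℂ | ‖z.1‖ < 1} := isOpen_lt hc1 continuous_const
    have h2 : IsOpen {z : ℂ × ℂ | ‖z.2‖ < 1} := isOpen_lt hc2 continuous_const
    have h3 : IsOpen {z : ℂ × ℂ |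
        (‖z.2‖) ^ 2 - a ^ 2 < 2 * (1 - a ^ 2) * ‖z.1‖} :=
      isOpen_lt (by continuity) (by continuity)
    exact h1.inter (h2.inter h3)
  · simp only [Set.mem_setOf_eq, norm_zero]
    refine ⟨one_pos, one_pos, ?_⟩
    nlinarith
  · rintro ⟨z1, z2⟩ ⟨h1, h2, h3⟩ l hl
    simp only [Set.mem_setOf_eq, Prod.smul_fst, Prod.smul_snd, smul_eq_mul, norm_mul] at *
    have hl0 : 0 ≤ ‖l‖ := norm_nonneg l
    have hz1 : 0 ≤ ‖z1‖ := norm_nonneg z1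
    have hz2 : 0 ≤ ‖z2‖ := norm_nonneg z2
    refine ⟨?_, ?_, ?_⟩
    · nlinarith
    · nlinarith
    · rcases eq_or_lt_of_le hl0 with h | h
      · rw [← h]; nlinarith
      · nlinarith [mul_lt_mul_of_pos_left h3 h, mul_le_mul_of_nonneg_right hl hz2,
          mul_le_mul_of_nonneg_right hl (sq_nonneg a)]
  · intro d
    have hd0 : 0 ≤ ‖d‖ := norm_nonneg d
    have hset : {t : ℝ | 0 < t ∧ t⁻¹ • (((0 : ℂ), d) : ℂ × ℂ) ∈
        {z : ℂ × ℂ | ‖z.1‖ < 1 ∧ ‖z.2‖ < 1 ∧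
          (‖z.2‖) ^ 2 - a ^ 2 < 2 * (1 - a ^ 2) * ‖z.1‖}}
        = Set.Ioi (‖d‖ / a) := by
      ext t
      simp only [Set.mem_setOf_eq, Prod.smul_fst, Prod.smul_snd, smul_zero, norm_zero,
        Set.mem_Ioi]
      constructor
      · rintro ⟨ht, -, h2, h3⟩
        have habs : ‖(t⁻¹ : ℝ) • d‖ = ‖d‖ / t := by
          rw [norm_smul, Real.norm_eq_abs, abs_of_pos (inv_pos.mpr ht)]
          ring
        rw [habs] at h3
        have : ‖d‖ / t < a := by nlinarith [div_nonneg hd0 ht.le]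
        rw [div_lt_iff₀ ht] at this
        rw [div_lt_iff₀ ha0]
        linarith [mul_comm a t]
      · intro ht
        have ht0 : 0 < t := lt_of_le_of_lt (div_nonneg hd0 ha0.le) ht
        have habs : ‖(t⁻¹ : ℝ) • d‖ = ‖d‖ / t := by
          rw [norm_smul, Real.norm_eq_abs, abs_of_pos (inv_pos.mpr ht0)]
          ring
        have hda : ‖d‖ / t < a := by
          rw [div_lt_iff₀ ht0]
          rw [div_lt_iff₀ ha0] at ht
          linarith [mul_comm a t]
        refine ⟨ht0, zero_lt_one, ?_, ?_⟩
        · rw [habs]; linarith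
        · rw [habs]
          have h1 : 0 ≤ ‖d‖ / t := div_nonneg hd0 ht0.le
          nlinarith
    rw [mink, hset, csInf_Ioi]
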